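/- Let p = 1, q > 0, w ≥ 1, C₁, C₂ > 0 with C₁/w < 1 and q < C₁, and suppose a nonnegative sequence {A(t)} satisfies A(t+1) ≤ (1 - C₁/(t+w)) A(t) + C₂/(t+w)^{1+q} for all t ≥ 0. Then for all t ≥ 0, A(t) ≤ (w/(t+w))^{C₁} A(0) + (1/(C₁-q))·((w+1)/w)^{C₁}·QC₂/(t+w+1)^q, where Q = ((w+1)/w)^{1+q}. -/

import Mathlib

lemma key_rpow (r a : ℝ) (hr : 0 ≤ r) (ha : 0 < a) :
    1 - r / a ≤ (a / (a + 1)) ^ (r : ℝ) := by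
  have hb : (0:ℝ) < a / (a + 1) := by positivity
  have hlog : Real.log ((a + 1) / a) ≤ 1 / a := by
    have h := Real.log_le_sub_one_of_pos (show (0:ℝ) < (a+1)/a by positivity)
    have h2 : (a + 1) / a - 1 = 1 / a := by field_simp; ring
    linarith
  have hlog2 : Real.log (a / (a + 1)) = - Real.log ((a + 1) / a) := by
    rw [← Real.log_inv]
    congr 1
    field_simp
  have h1 : -(r / a) ≤ r * Real.log (a / (a + 1)) := by
    rw [hlog2, mul_neg, neg_le_neg_iff]
    calc r * Real.log ((a + 1) / a) ≤ r * (1 / a) := mul_le_mul_of_nonneg_left hlog hr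
      _ = r / a := by ring
  calc 1 - r / a ≤ Real.exp (r * Real.log (a / (a + 1))) := by
        have := Real.add_one_le_exp (r * Real.log (a / (a + 1)))
        linarith
    _ = (a / (a + 1)) ^ r := by
        rw [Real.rpow_def_of_pos hb r, mul_comm]

theorem sequential_estimate_p_one_q_lt
    (q w C₁ C₂ : ℝ) (hq : 0 < q) (hw : 1 ≤ w)
    (hC₁ : 0 < C₁) (hC₂ : 0 < C₂)
    (hstep : C₁ / w < 1) (hqC : q < C₁)
    (A : ℕ → ℝ) (hA : ∀ t, 0 ≤ A t)
    (hrec : ∀ t : ℕ, A (t + 1) ≤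
      (1 - C₁ / ((t : ℝ) + w)) * A t + C₂ / ((t : ℝ) + w) ^ (1 + q)) :
    ∀ t : ℕ,
      A t ≤ (w / ((t : ℝ) + w)) ^ C₁ * A 0
          + 1 / (C₁ - q) * ((w + 1) / w) ^ C₁ *
              (((w + 1) / w) ^ (1 + q) * C₂) / ((t : ℝ) + w + 1) ^ q := by
  have hw0 : (0:ℝ) < w := by linarith
  set K : ℝ := 1 / (C₁ - q) * ((w + 1) / w) ^ C₁ * (((w + 1) / w) ^ (1 + q) * C₂) with hK
  have hqC' : 0 < C₁ - q := by linarith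
  clear_value K
  have hKpos : 0 < K := by
    have h1 : (0:ℝ) < ((w + 1) / w) ^ C₁ := Real.rpow_pos_of_pos (by positivity) _
    have h2 : (0:ℝ) < ((w + 1) / w) ^ (1 + q) := Real.rpow_pos_of_pos (by positivity) _
    rw [hK]; positivity
  intro t
  induction t with
  | zero =>
      push_cast
      rw [zero_add, div_self (ne_of_gt hw0), Real.one_rpow, one_mul]
      have : 0 < K / (w + 1) ^ q := by
        have := Real.rpow_pos_of_pos (show (0:ℝ) < w + 1 by linarith) q
        positivity
      linarith
  | succ t ih =>
      set x : ℝ := (t : ℝ) + w with hx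
      clear_value x
      have hx0 : 0 < x := by rw [hx]; positivity
      have hxw : w ≤ x := by have : (0:ℝ) ≤ (t:ℝ) := Nat.cast_nonneg t; linarith
      have hx1 : (0:ℝ) < x + 1 := by linarith
      have hx2 : (0:ℝ) < x + 2 := by linarith
      have h1mC : 0 ≤ 1 - C₁ / x := by
        have : C₁ / x ≤ C₁ / w := div_le_div_of_nonneg_left (le_of_lt hC₁) hw0 hxw
        linarith
      -- step from recursion and ih
      have hstep1 : A (t + 1) ≤ (1 - C₁ / x) * ((w / x) ^ C₁ * A 0 + K / (x + 1) ^ q)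
          + C₂ / x ^ (1 + q) := by
        have h := hrec t
        rw [← hx] at h
        have h2 := mul_le_mul_of_nonneg_left ih h1mC
        linarith
      -- part (i)
      have hGa : (1 - C₁ / x) * (w / x) ^ C₁ ≤ (w / (x + 1)) ^ C₁ := by
        have hkey := key_rpow C₁ x (le_of_lt hC₁) hx0
        have hsplit : (w / (x + 1)) ^ C₁ = (w / x) ^ C₁ * (x / (x + 1)) ^ C₁ := by
          rw [← Real.mul_rpow (by positivity) (by positivity)]
          congr 1
          field_simp
        rw [hsplit, mul_comm ((w / x) ^ C₁)]
        exact mul_le_mul_of_nonneg_right hkey (Real.rpow_nonneg (by positivity) _)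
      -- part (ii)
      have hP : (0:ℝ) < (x + 1) ^ q := Real.rpow_pos_of_pos hx1 q
      have hP1 : (0:ℝ) < (x + 1) ^ (1 + q) := Real.rpow_pos_of_pos hx1 _
      have hPx : (0:ℝ) < x ^ (1 + q) := Real.rpow_pos_of_pos hx0 _
      have hsplit1 : (x + 1) ^ (1 + q) = (x + 1) * (x + 1) ^ q := by
        rw [Real.rpow_add hx1, Real.rpow_one]
      set S : ℝ := K / (x + 1) ^ q with hS
      clear_value S
      have hSpos : 0 < S := by rw [hS]; exact div_pos hKpos hP
      have e1 : K / (x + 2) ^ q = S * ((x + 1) / (x + 2)) ^ q := by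
        rw [hS, Real.div_rpow (le_of_lt hx1) (le_of_lt hx2)]
        field_simp
      have hkey2 := key_rpow q (x + 1) (le_of_lt hq) hx1
      have e2 : S - S * ((x + 1) / (x + 2)) ^ q ≤ S * (q / (x + 1)) := by
        have h2' : (x + 1) + 1 = x + 2 := by ring
        rw [h2'] at hkey2
        nlinarith
      have e4 : S * (q / (x + 1)) = K * q / (x + 1) ^ (1 + q) := by
        rw [hS, hsplit1]
        field_simp
      have e3 : C₂ / x ^ (1 + q) ≤ K * (C₁ - q) / (x + 1) ^ (1 + q) := by
        rw [div_le_div_iff₀ hPx hP1]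
        have hKC : K * (C₁ - q) = ((w + 1) / w) ^ C₁ * (((w + 1) / w) ^ (1 + q) * C₂) := by
          rw [hK]; field_simp
        have hratio : ((x + 1) / x) ^ (1 + q) ≤ ((w + 1) / w) ^ (1 + q) := by
          apply Real.rpow_le_rpow (by positivity)
          · rw [div_le_div_iff₀ hx0 hw0]; nlinarith
          · positivity
        have hone : (1:ℝ) ≤ ((w + 1) / w) ^ C₁ := by
          apply Real.one_le_rpow _ (le_of_lt hC₁)
          rw [le_div_iff₀ hw0]; linarith
        have hx1split : (x + 1) ^ (1 + q) = ((x + 1) / x) ^ (1 + q) * x ^ (1 + q) := by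
          rw [← Real.mul_rpow (by positivity) (by positivity)]
          congr 1
          field_simp
        rw [hKC, hx1split]
        have hwq : (0:ℝ) < ((w + 1) / w) ^ (1 + q) := Real.rpow_pos_of_pos (by positivity) _
        calc C₂ * (((x + 1) / x) ^ (1 + q) * x ^ (1 + q))
            ≤ C₂ * (((w + 1) / w) ^ (1 + q) * x ^ (1 + q)) := by
              apply mul_le_mul_of_nonneg_left _ (le_of_lt hC₂)
              exact mul_le_mul_of_nonneg_right hratio (le_of_lt hPx)
          _ = 1 * (((w + 1) / w) ^ (1 + q) * C₂) * x ^ (1 + q) := by ring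
          _ ≤ ((w + 1) / w) ^ C₁ * (((w + 1) / w) ^ (1 + q) * C₂) * x ^ (1 + q) := by
              apply mul_le_mul_of_nonneg_right _ (le_of_lt hPx)
              exact mul_le_mul_of_nonneg_right hone (by positivity)
      have e5 : K * q / (x + 1) ^ (1 + q) + K * (C₁ - q) / (x + 1) ^ (1 + q)
          ≤ C₁ / x * S := by
        have hlhs : K * q / (x + 1) ^ (1 + q) + K * (C₁ - q) / (x + 1) ^ (1 + q)
            = K * C₁ / (x + 1) ^ (1 + q) := by
          rw [← add_div]
          congr 1
          ring
        have hrhs : C₁ / x * S = K * C₁ / (x * (x + 1) ^ q) := by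
          rw [hS]; field_simp
        rw [hlhs, hrhs, hsplit1]
        have hden : x * (x + 1) ^ q ≤ (x + 1) * (x + 1) ^ q :=
          mul_le_mul_of_nonneg_right (by linarith) (le_of_lt hP)
        exact div_le_div_of_nonneg_left (by positivity) (by positivity) hden
      have hGb : (1 - C₁ / x) * S + C₂ / x ^ (1 + q) ≤ K / (x + 2) ^ q := by
        have hexp : (1 - C₁ / x) * S = S - C₁ / x * S := by ring
        rw [hexp, e1]
        linarith
      -- combine
      have hgoal : A (t + 1) ≤ (w / (x + 1)) ^ C₁ * A 0 + K / (x + 2) ^ q := by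
        have h0 := hA 0
        have hGa' := mul_le_mul_of_nonneg_right hGa h0
        calc A (t + 1) ≤ (1 - C₁ / x) * ((w / x) ^ C₁ * A 0 + S)
            + C₂ / x ^ (1 + q) := hstep1
          _ = (1 - C₁ / x) * (w / x) ^ C₁ * A 0 + ((1 - C₁ / x) * S + C₂ / x ^ (1 + q)) := by
              ring
          _ ≤ (w / (x + 1)) ^ C₁ * A 0 + K / (x + 2) ^ q := by
              exact add_le_add hGa' hGb
      push_cast
      have hrw1 : (t:ℝ) + 1 + w = x + 1 := by rw [hx]; ring
      have hrw2 : (t:ℝ) + 1 + w + 1 = x + 2 := by rw [hx]; ring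
      rw [hrw1, show x + 1 + 1 = x + 2 from by ring]
      exact hgoal
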